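/- In the differential polynomial ring F{X} with derivation D over a field of characteristic zero, the subspace spanned by the variables X together with all elements D(w), where w ranges over monomials with deg(w) − d(w) = 2, is closed under the symmetrized Novikov product a ∘ b = D(ab). -/

import Mathlib

open MvPolynomial

/-- The derivation `D` on the differential polynomial ring `F{x₁,…,xₙ}`, modelled as
`MvPolynomial (Fin n × ℕ) F` with `x_j^{(i)} = X (j, i)`. -/
noncomputable def Dn (F : Type*) [Field F] (n : ℕ) :
    Derivation F (MvPolynomial (Fin n × ℕ) F) (MvPolynomial (Fin n × ℕ) F) :=
  mkDerivation F fun p => X (p.1, p.2 + 1)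

/-- Standard degree of a differential monomial: the total number of factors. -/
def mdeg {n : ℕ} (w : (Fin n × ℕ) →₀ ℕ) : ℕ := w.sum fun _ e => e

/-- Differential degree: the sum of all differentiation orders. -/
def mdiff {n : ℕ} (w : (Fin n × ℕ) →₀ ℕ) : ℕ := w.sum fun p e => p.2 * e

/-- The integer weight `1 - i` on the variable `x_j^{(i)}`. -/
def wtn (n : ℕ) : Fin n × ℕ → ℤ := fun p => 1 - (p.2 : ℤ)

lemma weight_wtn {n : ℕ} (w : (Fin n × ℕ) →₀ ℕ) :
    Finsupp.weight (wtn n) w = (mdeg w : ℤ) - (mdiff w : ℤ) := by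
  rw [Finsupp.weight_apply, mdeg, mdiff, Finsupp.sum, Finsupp.sum, Finsupp.sum]
  push_cast
  rw [← Finset.sum_sub_distrib]
  refine Finset.sum_congr rfl fun p _ => ?_
  simp only [wtn, smul_eq_mul]
  ring

lemma weight_single_one {n : ℕ} (p : Fin n × ℕ) :
    Finsupp.weight (wtn n) (Finsupp.single p 1) = wtn n p := by
  rw [Finsupp.weight_apply, Finsupp.sum_single_index (by simp)]
  simp

/-- `Dn` lowers the weighted degree of a monomial by exactly 1. -/
lemma Dn_monomial_mem {F : Type*} [Field F] {n : ℕ} (w : (Fin n × ℕ) →₀ ℕ) (c : F) (m : ℤ)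
    (hw : Finsupp.weight (wtn n) w = m) :
    Dn F n (monomial w c) ∈ weightedHomogeneousSubmodule F (wtn n) (m - 1) := by
  show (mkDerivation F fun p : Fin n × ℕ => X (p.1, p.2 + 1)) (monomial w c) ∈ _
  rw [mkDerivation_monomial]
  refine Submodule.smul_mem _ _ ?_
  rw [Finsupp.sum]
  refine Submodule.sum_mem _ fun p hp => ?_
  rw [smul_eq_mul, mem_weightedHomogeneousSubmodule]
  have hp' : w p ≠ 0 := Finsupp.mem_support_iff.mp hp
  have hsub : (w - Finsupp.single p 1) + Finsupp.single p 1 = w := by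
    ext q
    rcases eq_or_ne p q with rfl | h
    · simp only [Finsupp.add_apply, Finsupp.tsub_apply, Finsupp.single_eq_same]
      omega
    · simp [Finsupp.single_eq_of_ne' h]
  have hwt : Finsupp.weight (wtn n) (w - Finsupp.single p 1) = m - wtn n p := by
    have := congrArg (Finsupp.weight (wtn n)) hsub
    rw [map_add, weight_single_one, hw] at this
    omega
  have h1 : IsWeightedHomogeneous (wtn n)
      (monomial (w - Finsupp.single p 1) ((w p : F))) (m - wtn n p) :=
    isWeightedHomogeneous_monomial _ _ _ hwt
  have h2 : IsWeightedHomogeneous (wtn n)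
      (X (p.1, p.2 + 1) : MvPolynomial (Fin n × ℕ) F) (wtn n p - 1) := by
    have := isWeightedHomogeneous_X F (wtn n) (p.1, p.2 + 1)
    convert this using 1
    simp only [wtn]
    push_cast
    ring
  have := h1.mul h2
  convert this using 1
  ring

theorem stmt13 (F : Type*) [Field F] [CharZero F] (n : ℕ) :
    let S : Submodule F (MvPolynomial (Fin n × ℕ) F) :=
      Submodule.span F
        ({p | ∃ j : Fin n, p = X (j, 0)} ∪
          {p | ∃ w : (Fin n × ℕ) →₀ ℕ, mdeg w = mdiff w + 2 ∧ p = Dn F n (monomial w (1 : F))})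
    ∀ a b : MvPolynomial (Fin n × ℕ) F, a ∈ S → b ∈ S → Dn F n (a * b) ∈ S := by
  intro S a b ha hb
  -- Every generator of `S` is weighted homogeneous of degree 1.
  have hS : S ≤ weightedHomogeneousSubmodule F (wtn n) 1 := by
    rw [Submodule.span_le]
    rintro p (⟨j, rfl⟩ | ⟨w, hw, rfl⟩)
    · rw [SetLike.mem_coe, mem_weightedHomogeneousSubmodule]
      have h0 : wtn n (j, 0) = 1 := by simp [wtn]
      rw [← h0]
      exact isWeightedHomogeneous_X F (wtn n) (j, 0)
    · rw [SetLike.mem_coe]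
      have hw2 : Finsupp.weight (wtn n) w = 2 := by
        rw [weight_wtn]; omega
      have := Dn_monomial_mem w (1 : F) 2 hw2
      norm_num at this
      exact this
  -- Hence `a * b` is weighted homogeneous of degree 2.
  have hab : IsWeightedHomogeneous (wtn n) (a * b) 2 := by
    have := (hS ha).mul (hS hb)
    norm_num at this
    exact this
  -- `D` of any weighted homogeneous polynomial of degree 2 lies in `S`.
  rw [(a * b).as_sum, map_sum]
  refine Submodule.sum_mem _ fun v hv => ?_
  have h2 : Finsupp.weight (wtn n) v = 2 := hab (mem_support_iff.mp hv)
  have : (monomial v) (coeff v (a * b)) = (coeff v (a * b)) • (monomial v (1 : F)) := by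
    rw [smul_monomial, smul_eq_mul, mul_one]
  rw [this, (Dn F n).map_smul]
  refine Submodule.smul_mem _ _ (Submodule.subset_span ?_)
  right
  refine ⟨v, ?_, rfl⟩
  rw [weight_wtn] at h2
  omega
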